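/- arXiv:2312.00295 — 4 statements merged into one kernel-verified Lean document; each statement's English description precedes it below -/
import Mathlib

section
/- For every natural number n ≥ 1 and every real x that is not a nonpositive integer in {0, -1, ..., -n}, one has 1/(x(x+1)···(x+n))^2 = ∑_{k=0}^{n} a_k/(x+k) + ∑_{k=0}^{n} b_k/(x+k)^2, where a_k = 2(H_k - H_{n-k})/(k!(n-k)!)^2 and b_k = 1/(k!(n-k)!)^2. -/
open Polynomial Finset



private lemma harm_cast (k : ℕ) : (harmonic k : ℝ) = ∑ i ∈ Finset.range k, ((i : ℝ) + 1)⁻¹ := by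
  rw [harmonic]
  push_cast
  rfl

private lemma hsum (n k : ℕ) (hk : k ≤ n) :
    ∑ j ∈ Finset.range (n + 1), ((k : ℝ) - j)⁻¹
      = (harmonic k : ℝ) - (harmonic (n - k) : ℝ) := by
  have hsplit : ∑ j ∈ Finset.range (n + 1), ((k : ℝ) - j)⁻¹
      = (∑ j ∈ Finset.Ico 0 (k + 1), ((k : ℝ) - j)⁻¹)
        + ∑ j ∈ Finset.Ico (k + 1) (n + 1), ((k : ℝ) - j)⁻¹ := by
    rw [Finset.range_eq_Ico,
      ← Finset.sum_Ico_consecutive (fun j : ℕ => ((k : ℝ) - j)⁻¹) (Nat.zero_le (k+1))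
        (by omega : k + 1 ≤ n + 1)]
  have h1 : ∑ j ∈ Finset.Ico 0 (k + 1), ((k : ℝ) - j)⁻¹ = (harmonic k : ℝ) := by
    rw [Nat.Ico_zero_eq_range, ← Finset.sum_range_reflect]
    have hc : ∀ j ∈ Finset.range (k + 1), ((k : ℝ) - ((k + 1 - 1 - j : ℕ) : ℝ))⁻¹ = ((j : ℝ))⁻¹ := by
      intro j hj
      simp only [Finset.mem_range] at hj
      have h2 : (k + 1 - 1 - j : ℕ) = k - j := by omega
      rw [h2, Nat.cast_sub (by omega)]
      congr 1
      ring
    rw [Finset.sum_congr rfl hc, Finset.sum_range_succ', harm_cast]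
    push_cast
    simp
  have h2 : ∑ j ∈ Finset.Ico (k + 1) (n + 1), ((k : ℝ) - j)⁻¹ = -(harmonic (n - k) : ℝ) := by
    rw [Finset.sum_Ico_eq_sum_range]
    have h3 : (n + 1 - (k + 1) : ℕ) = n - k := by omega
    rw [h3, harm_cast, ← Finset.sum_neg_distrib]
    refine Finset.sum_congr rfl fun i _ => ?_
    push_cast
    rw [← inv_neg]
    congr 1
    ring
  rw [hsplit, h1, h2]
  ring

private lemma hprod (n k : ℕ) (hk : k ≤ n) :
    ∏ j ∈ (Finset.range (n + 1)).erase k, ((j : ℝ) - k) ^ 2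
      = ((k.factorial : ℝ) * (n - k).factorial) ^ 2 := by
  have hset : (Finset.range (n + 1)).erase k = Finset.range k ∪ Finset.Ico (k + 1) (n + 1) := by
    ext j
    simp only [Finset.mem_erase, Finset.mem_range, Finset.mem_union, Finset.mem_Ico]
    omega
  have hdisj : Disjoint (Finset.range k) (Finset.Ico (k + 1) (n + 1)) := by
    rw [Finset.disjoint_left]
    intro a ha hb
    simp only [Finset.mem_range] at ha
    simp only [Finset.mem_Ico] at hb
    omega
  rw [hset, Finset.prod_union hdisj]
  have h1 : ∏ j ∈ Finset.range k, ((j : ℝ) - k) ^ 2 = (k.factorial : ℝ) ^ 2 := by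
    rw [← Finset.prod_range_reflect]
    have hc : ∀ j ∈ Finset.range k, (((k - 1 - j : ℕ) : ℝ) - k) ^ 2 = ((j : ℝ) + 1) ^ 2 := by
      intro j hj
      simp only [Finset.mem_range] at hj
      have h2 : (k - 1 - j : ℕ) = k - (j + 1) := by omega
      rw [h2, Nat.cast_sub (by omega)]
      push_cast
      ring
    rw [Finset.prod_congr rfl hc, Finset.prod_pow]
    have := Finset.prod_range_add_one_eq_factorial k
    have hcast : (∏ j ∈ Finset.range k, ((j : ℝ) + 1)) = (k.factorial : ℝ) := by
      rw [← this]
      push_cast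
      rfl
    rw [hcast]
  have h2 : ∏ j ∈ Finset.Ico (k + 1) (n + 1), ((j : ℝ) - k) ^ 2 = ((n - k).factorial : ℝ) ^ 2 := by
    rw [Finset.prod_Ico_eq_prod_range]
    have h3 : (n + 1 - (k + 1) : ℕ) = n - k := by omega
    rw [h3]
    have hc : ∀ j ∈ Finset.range (n - k), (((k + 1 + j : ℕ) : ℝ) - k) ^ 2 = ((j : ℝ) + 1) ^ 2 := by
      intro j _
      push_cast
      ring
    rw [Finset.prod_congr rfl hc, Finset.prod_pow]
    have := Finset.prod_range_add_one_eq_factorial (n - k)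
    have hcast : (∏ j ∈ Finset.range (n - k), ((j : ℝ) + 1)) = ((n - k).factorial : ℝ) := by
      rw [← this]
      push_cast
      rfl
    rw [hcast]
  rw [h1, h2]
  ring


private lemma sq_dvd_of_isRoot {p : Polynomial ℝ} {a : ℝ} (h0 : p.eval a = 0)
    (h1 : (derivative p).eval a = 0) : (X - C a) ^ 2 ∣ p := by
  obtain ⟨q, rfl⟩ := (Polynomial.dvd_iff_isRoot.mpr h0)
  have hq : q.eval a = 0 := by
    simpa [derivative_mul] using h1
  obtain ⟨r, rfl⟩ := (Polynomial.dvd_iff_isRoot.mpr hq)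
  exact ⟨r, by ring⟩

private lemma derivative_finset_prod {ι : Type*} [DecidableEq ι] (s : Finset ι)
    (f : ι → Polynomial ℝ) :
    derivative (∏ i ∈ s, f i) = ∑ i ∈ s, (∏ j ∈ s.erase i, f j) * derivative (f i) := by
  induction s using Finset.induction_on with
  | empty => simp
  | @insert a s ha ih =>
    rw [Finset.prod_insert ha, derivative_mul, ih, Finset.sum_insert ha, Finset.erase_insert ha,
      Finset.mul_sum]
    congr 1
    · exact mul_comm _ _
    · refine Finset.sum_congr rfl fun i hi => ?_
      have hai : a ≠ i := fun h => ha (h ▸ hi)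
      rw [Finset.erase_insert_of_ne hai,
        Finset.prod_insert (fun h => ha (Finset.mem_of_mem_erase h))]
      ring

noncomputable def Qp (n k : ℕ) : Polynomial ℝ :=
  ∏ j ∈ (Finset.range (n + 1)).erase k, (X + C (j : ℝ))

noncomputable def Np (n : ℕ) : Polynomial ℝ :=
  (∑ k ∈ Finset.range (n + 1),
    C (2 * ((harmonic k : ℝ) - (harmonic (n - k) : ℝ)) /
      ((k.factorial * (n - k).factorial : ℝ)) ^ 2) * ((X + C (k : ℝ)) * Qp n k ^ 2)) +
  ∑ k ∈ Finset.range (n + 1),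
    C (1 / ((k.factorial * (n - k).factorial : ℝ)) ^ 2) * Qp n k ^ 2

private lemma Qp_eval_ne (n j k : ℕ) (hk : k ≤ n) (hjk : j ≠ k) :
    (Qp n j).eval (-(k : ℝ)) = 0 := by
  rw [Qp, eval_prod]
  refine Finset.prod_eq_zero (i := k) ?_ (by simp)
  simp only [Finset.mem_erase, Finset.mem_range]
  exact ⟨fun h => hjk h.symm, by omega⟩


private lemma Dfac_ne (n k : ℕ) : ((k.factorial * (n - k).factorial : ℝ)) ≠ 0 := by
  positivity

private lemma Qp_eval_sq (n k : ℕ) (hk : k ≤ n) :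
    ((Qp n k).eval (-(k : ℝ))) ^ 2 = ((k.factorial * (n - k).factorial : ℝ)) ^ 2 := by
  rw [Qp, eval_prod, ← Finset.prod_pow]
  have := hprod n k hk
  rw [show ((k.factorial : ℝ) * (n - k).factorial) ^ 2
      = ((k.factorial * (n - k).factorial : ℝ)) ^ 2 by push_cast; ring] at this
  rw [← this]
  refine Finset.prod_congr rfl fun j _ => ?_
  simp only [eval_add, eval_X, eval_C]
  ring

private lemma Qp_eval_ne_zero (n k : ℕ) (hk : k ≤ n) : (Qp n k).eval (-(k : ℝ)) ≠ 0 := by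
  intro h
  have h2 := Qp_eval_sq n k hk
  rw [h] at h2
  exact (pow_ne_zero 2 (Dfac_ne n k)) (by rw [← h2]; norm_num)

private lemma Qp_deriv_eval (n k : ℕ) (hk : k ≤ n) :
    (derivative (Qp n k)).eval (-(k : ℝ))
      = (Qp n k).eval (-(k : ℝ)) * ∑ j ∈ (Finset.range (n + 1)).erase k, ((j : ℝ) - k)⁻¹ := by
  rw [Qp, derivative_finset_prod, eval_finset_sum, Finset.mul_sum]
  refine Finset.sum_congr rfl fun j hj => ?_
  have hjk : j ≠ k := (Finset.mem_erase.mp hj).1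
  have hjk' : ((j : ℝ) - k) ≠ 0 := by
    intro h
    exact hjk (Nat.cast_injective (by linarith : (j : ℝ) = k))
  have hP := Finset.prod_erase_mul ((Finset.range (n + 1)).erase k)
    (fun i => eval (-(k : ℝ)) (X + C (i : ℝ))) hj
  simp only [eval_mul, eval_prod, eval_add, eval_X, eval_C] at hP ⊢
  rw [derivative_add, derivative_X, derivative_C, add_zero, eval_one, mul_one, ← hP]
  have : (-(k : ℝ) + j) = ((j : ℝ) - k) := by ring
  rw [this]
  field_simp

private lemma Np_eval (n k : ℕ) (hk : k ≤ n) : (Np n).eval (-(k : ℝ)) = 1 := by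
  rw [Np, eval_add, eval_finset_sum, eval_finset_sum]
  rw [Finset.sum_eq_single k
    (fun j hj hjk => by
      simp only [eval_mul, eval_pow, eval_C, Qp_eval_ne n j k hk hjk]
      ring)
    (fun h => absurd (Finset.mem_range.mpr (by omega)) h)]
  rw [Finset.sum_eq_single k
    (fun j hj hjk => by
      simp only [eval_mul, eval_pow, eval_C, Qp_eval_ne n j k hk hjk]
      ring)
    (fun h => absurd (Finset.mem_range.mpr (by omega)) h)]
  simp only [eval_mul, eval_pow, eval_add, eval_X, eval_C, Qp_eval_sq n k hk]
  rw [show (-(k : ℝ) + k) = 0 by ring]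
  field_simp
  ring

private lemma Np_deriv_eval (n k : ℕ) (hk : k ≤ n) :
    (derivative (Np n)).eval (-(k : ℝ)) = 0 := by
  have hS : ∑ j ∈ (Finset.range (n + 1)).erase k, ((j : ℝ) - k)⁻¹
      = (harmonic (n - k) : ℝ) - (harmonic k : ℝ) := by
    have h1 : ∑ j ∈ (Finset.range (n + 1)).erase k, ((j : ℝ) - k)⁻¹
        = -∑ j ∈ (Finset.range (n + 1)).erase k, ((k : ℝ) - j)⁻¹ := by
      rw [← Finset.sum_neg_distrib]
      refine Finset.sum_congr rfl fun j _ => ?_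
      rw [← inv_neg]
      congr 1
      ring
    have h2 : ∑ j ∈ (Finset.range (n + 1)).erase k, ((k : ℝ) - j)⁻¹
        = ∑ j ∈ Finset.range (n + 1), ((k : ℝ) - j)⁻¹ :=
      Finset.sum_erase _ (by simp)
    rw [h1, h2, hsum n k hk]
    ring
  rw [Np, derivative_add, derivative_sum, derivative_sum, eval_add, eval_finset_sum,
    eval_finset_sum]
  rw [Finset.sum_eq_single k
    (fun j hj hjk => by
      simp only [derivative_mul, derivative_C, derivative_pow, derivative_add, derivative_X,
        zero_mul, add_zero, eval_add, eval_mul, eval_pow, eval_C, eval_X, eval_zero,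
        Qp_eval_ne n j k hk hjk]
      ring)
    (fun h => absurd (Finset.mem_range.mpr (by omega)) h)]
  rw [Finset.sum_eq_single k
    (fun j hj hjk => by
      simp only [derivative_mul, derivative_C, derivative_pow, derivative_add, derivative_X,
        zero_mul, add_zero, eval_add, eval_mul, eval_pow, eval_C, eval_X, eval_zero,
        Qp_eval_ne n j k hk hjk]
      ring)
    (fun h => absurd (Finset.mem_range.mpr (by omega)) h)]
  simp only [derivative_mul, derivative_C, derivative_pow, derivative_add, derivative_X,
    zero_mul, add_zero, eval_add, eval_mul, eval_pow, eval_C, eval_X, eval_one,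
    Qp_deriv_eval n k hk, hS]
  rw [show (-(k : ℝ) + k) = 0 by ring]
  have hD := Dfac_ne n k
  field_simp
  ring
  simp

private lemma Np_sub_one_dvd (n : ℕ) :
    (∏ k ∈ Finset.range (n + 1), (X + C (k : ℝ)) ^ 2) ∣ (Np n - 1) := by
  apply Finset.prod_dvd_of_coprime
  · intro i _ j _ hij
    have h := Polynomial.pairwise_coprime_X_sub_C (K := ℝ) (I := ℕ)
        (s := fun m : ℕ => -(m : ℝ))
        (fun a b hab => Nat.cast_injective (neg_injective hab)) hij
    simp only [Function.onFun, map_neg, sub_neg_eq_add] at h ⊢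
    exact h.pow
  · intro k hk
    simp only [Finset.mem_range] at hk
    have hk' : k ≤ n := by omega
    have hXC : (X + C ((k : ℝ))) = X - C (-(k : ℝ)) := by rw [map_neg, sub_neg_eq_add]
    rw [hXC]
    apply sq_dvd_of_isRoot
    · simp [Np_eval n k hk']
    · simp [Np_deriv_eval n k hk']

private lemma Qp_natDegree_le (n k : ℕ) (hk : k ≤ n) : (Qp n k).natDegree ≤ n := by
  rw [Qp]
  refine le_trans (Polynomial.natDegree_prod_le _ _) ?_
  have h1 : ∀ j ∈ (Finset.range (n + 1)).erase k, (X + C (j : ℝ)).natDegree = 1 :=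
    fun j _ => Polynomial.natDegree_X_add_C _
  rw [Finset.sum_congr rfl h1, Finset.sum_const,
    Finset.card_erase_of_mem (Finset.mem_range.mpr (by omega)), Finset.card_range]
  simp

private lemma Np_eq_one (n : ℕ) : Np n = 1 := by
  by_contra hne
  have hsub : Np n - 1 ≠ 0 := sub_ne_zero.mpr hne
  have hdeg := Polynomial.natDegree_le_of_dvd (Np_sub_one_dvd n) hsub
  have hprodn : (∏ k ∈ Finset.range (n + 1), (X + C (k : ℝ)) ^ 2).natDegree = 2 * (n + 1) := by
    have hnd := Polynomial.natDegree_prod (s := Finset.range (n + 1))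
      (f := fun k : ℕ => (X + C (k : ℝ)) ^ 2)
      (fun i _ => pow_ne_zero _ (Polynomial.monic_X_add_C (i : ℝ)).ne_zero)
    rw [hnd]
    have h1 : ∀ j ∈ Finset.range (n + 1), ((X + C (j : ℝ)) ^ 2).natDegree = 2 := by
      intro j _
      rw [Polynomial.natDegree_pow, Polynomial.natDegree_X_add_C]
    rw [Finset.sum_congr rfl h1, Finset.sum_const, Finset.card_range]
    ring
  have hterm1 : ∀ k ∈ Finset.range (n + 1),
      (C (2 * ((harmonic k : ℝ) - (harmonic (n - k) : ℝ)) /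
        ((k.factorial * (n - k).factorial : ℝ)) ^ 2) *
          ((X + C (k : ℝ)) * Qp n k ^ 2)).natDegree ≤ 2 * n + 1 := by
    intro k hk
    simp only [Finset.mem_range] at hk
    have hq : (Qp n k ^ 2).natDegree ≤ 2 * n :=
      le_trans (Polynomial.natDegree_pow_le)
        (by have := Qp_natDegree_le n k (by omega); omega)
    have hx : (X + C ((k : ℝ))).natDegree = 1 := Polynomial.natDegree_X_add_C _
    have hb : ((X + C (k : ℝ)) * Qp n k ^ 2).natDegree ≤ 2 * n + 1 :=
      le_trans Polynomial.natDegree_mul_le (by omega)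
    refine le_trans Polynomial.natDegree_mul_le ?_
    rw [Polynomial.natDegree_C]
    omega
  have hterm2 : ∀ k ∈ Finset.range (n + 1),
      (C (1 / ((k.factorial * (n - k).factorial : ℝ)) ^ 2) * Qp n k ^ 2).natDegree
        ≤ 2 * n + 1 := by
    intro k hk
    simp only [Finset.mem_range] at hk
    refine le_trans (Polynomial.natDegree_mul_le) ?_
    rw [Polynomial.natDegree_C]
    have hq : (Qp n k ^ 2).natDegree ≤ 2 * n :=
      le_trans (Polynomial.natDegree_pow_le)
        (by have := Qp_natDegree_le n k (by omega); omega)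
    omega
  have hNdeg : (Np n - 1).natDegree ≤ 2 * n + 1 := by
    refine le_trans (Polynomial.natDegree_sub_le _ _) ?_
    rw [Polynomial.natDegree_one]
    rw [max_le_iff]
    refine ⟨?_, by omega⟩
    rw [Np]
    refine le_trans (Polynomial.natDegree_add_le _ _) ?_
    rw [max_le_iff]
    exact ⟨Polynomial.natDegree_sum_le_of_forall_le _ _ hterm1,
      Polynomial.natDegree_sum_le_of_forall_le _ _ hterm2⟩
  omega

theorem partial_fraction_sq_reciprocal_risingFactorial (n : ℕ) (hn : 1 ≤ n) (x : ℝ)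
    (hx : ∀ k ≤ n, x + (k : ℝ) ≠ 0) :
    1 / (∏ k ∈ Finset.range (n + 1), (x + k)) ^ 2 =
      (∑ k ∈ Finset.range (n + 1),
        (2 * ((harmonic k : ℝ) - (harmonic (n - k) : ℝ)) /
          ((k.factorial * (n - k).factorial : ℝ)) ^ 2) / (x + k)) +
      ∑ k ∈ Finset.range (n + 1),
        (1 / ((k.factorial * (n - k).factorial : ℝ)) ^ 2) / (x + k) ^ 2 := by
  have hN := congrArg (Polynomial.eval x) (Np_eq_one n)
  rw [Np, eval_add, eval_finset_sum, eval_finset_sum, eval_one] at hN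
  simp only [eval_mul, eval_pow, eval_add, eval_X, eval_C, Qp, eval_prod] at hN
  have hfac : ∀ k ∈ Finset.range (n + 1), (x + (k : ℝ)) ≠ 0 := fun k hk =>
    hx k (Nat.lt_succ_iff.mp (Finset.mem_range.mp hk))
  have hP0 : (∏ k ∈ Finset.range (n + 1), (x + (k : ℝ))) ≠ 0 :=
    Finset.prod_ne_zero_iff.mpr hfac
  have hq : ∀ k ∈ Finset.range (n + 1),
      (∏ j ∈ (Finset.range (n + 1)).erase k, (x + (j : ℝ))) * (x + k)
        = ∏ k ∈ Finset.range (n + 1), (x + (k : ℝ)) := fun k hk =>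
    Finset.prod_erase_mul _ _ hk
  have hq0 : ∀ k ∈ Finset.range (n + 1),
      (∏ j ∈ (Finset.range (n + 1)).erase k, (x + (j : ℝ))) ≠ 0 := fun k hk =>
    Finset.prod_ne_zero_iff.mpr (fun j hj => hfac j (Finset.mem_of_mem_erase hj))
  have e1 : ∀ k ∈ Finset.range (n + 1),
      (2 * ((harmonic k : ℝ) - (harmonic (n - k) : ℝ)) /
          ((k.factorial * (n - k).factorial : ℝ)) ^ 2) / (x + k)
      = (2 * ((harmonic k : ℝ) - (harmonic (n - k) : ℝ)) /
          ((k.factorial * (n - k).factorial : ℝ)) ^ 2)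
          * ((x + (k : ℝ)) * (∏ j ∈ (Finset.range (n + 1)).erase k, (x + (j : ℝ))) ^ 2)
          / (∏ k ∈ Finset.range (n + 1), (x + (k : ℝ))) ^ 2 := by
    intro k hk
    rw [← hq k hk]
    have h1 := hfac k hk
    have h2 := hq0 k hk
    have h3 := Dfac_ne n k
    field_simp
  have e2 : ∀ k ∈ Finset.range (n + 1),
      (1 / ((k.factorial * (n - k).factorial : ℝ)) ^ 2) / (x + k) ^ 2
      = (1 / ((k.factorial * (n - k).factorial : ℝ)) ^ 2)
          * (∏ j ∈ (Finset.range (n + 1)).erase k, (x + (j : ℝ))) ^ 2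
          / (∏ k ∈ Finset.range (n + 1), (x + (k : ℝ))) ^ 2 := by
    intro k hk
    rw [← hq k hk]
    have h1 := hfac k hk
    have h2 := hq0 k hk
    have h3 := Dfac_ne n k
    field_simp
  rw [Finset.sum_congr rfl e1, Finset.sum_congr rfl e2, ← Finset.sum_div, ← Finset.sum_div,
    ← add_div, hN]
end

section
/- For every natural number n ≥ 1, ∑_{j=0}^{n} C(n,j)^2 · ((H_{n-j} - H_j)(2j - n) + 1) = 0. -/
private noncomputable def gAux (n j : ℕ) : ℝ :=
  (n.choose j : ℝ) ^ 2 *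
    ((j : ℝ) ^ 2 * ((harmonic j : ℝ) - (harmonic (n - j) : ℝ)) - j) / n

set_option maxHeartbeats 1000000 in
theorem sum_sq_choose_harmonic_identity (n : ℕ) (hn : 1 ≤ n) :
    ∑ j ∈ Finset.range (n + 1),
      (n.choose j : ℝ) ^ 2 *
        (((harmonic (n - j) : ℝ) - (harmonic j : ℝ)) * (2 * j - n) + 1) = 0 := by
  have hn0 : (n : ℝ) ≠ 0 := by positivity
  have key : ∀ j ∈ Finset.range (n + 1),
      (n.choose j : ℝ) ^ 2 *
        (((harmonic (n - j) : ℝ) - (harmonic j : ℝ)) * (2 * j - n) + 1)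
        = gAux n (j + 1) - gAux n j := by
    intro j hj
    simp only [Finset.mem_range, Nat.lt_succ_iff] at hj
    rcases eq_or_lt_of_le hj with rfl | hlt
    · -- j = n case
      have h1 : j.choose (j + 1) = 0 := Nat.choose_eq_zero_of_lt (Nat.lt_succ_self j)
      simp only [gAux, h1, Nat.sub_self, Nat.choose_self, harmonic_zero]
      push_cast
      field_simp
      ring
    · -- j < n case
      obtain ⟨k, hk⟩ : ∃ k, n = j + k + 1 := ⟨n - j - 1, by omega⟩
      have hnj : n - j = k + 1 := by omega
      have hnj1 : n - (j + 1) = k := by omega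
      have hchoose : n.choose (j + 1) * (j + 1) = n.choose j * (n - j) :=
        Nat.choose_succ_right_eq n j
      rw [hnj] at hchoose
      have hj1 : (j : ℝ) + 1 ≠ 0 := by positivity
      have hc' : (n.choose (j + 1) : ℝ) = (n.choose j : ℝ) * (k + 1) / (j + 1) := by
        rw [eq_div_iff hj1]
        exact_mod_cast congrArg (Nat.cast : ℕ → ℝ) hchoose
      have hH1 : (harmonic (j + 1) : ℝ) = (harmonic j : ℝ) + 1 / ((j : ℝ) + 1) := by
        rw [harmonic_succ]; push_cast; ring
      have hH2 : (harmonic (n - j) : ℝ) = (harmonic k : ℝ) + 1 / ((k : ℝ) + 1) := by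
        rw [hnj, harmonic_succ]; push_cast; ring
      have hk1 : (k : ℝ) + 1 ≠ 0 := by positivity
      have hnr : (n : ℝ) = (j : ℝ) + (k : ℝ) + 1 := by push_cast [hk]; ring
      rw [gAux, gAux, hnj1, hc', hH1, hH2]
      push_cast
      rw [hnr]
      have hjk1 : (j : ℝ) + (k : ℝ) + 1 ≠ 0 := by positivity
      field_simp
      ring
  rw [Finset.sum_congr rfl key, Finset.sum_range_sub (gAux n)]
  have h1 : n.choose (n + 1) = 0 := Nat.choose_eq_zero_of_lt (Nat.lt_succ_self n)
  simp [gAux, h1]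
end

section
/- For every natural number n ≥ 1, ∑_{j=0}^{n} C(n,j)^2 · (2j(H_{n-j} - H_j) + 1) = 0. -/
open Finset

/-- `(k+1) * C(n+1, k+1) = (n+1) * C(n, k)` over ℝ. -/
lemma aux_a (n k : ℕ) :
    ((k : ℝ) + 1) * ((n + 1).choose (k + 1)) = ((n : ℝ) + 1) * (n.choose k) := by
  have h : ((n + 1) * n.choose k : ℕ) = ((n + 1).choose (k + 1) * (k + 1) : ℕ) :=
    Nat.add_one_mul_choose_eq n k
  have := congrArg (Nat.cast (R := ℝ)) h
  push_cast at this
  linarith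

/-- `(n - k) * C(n+1, k+1) = (n+1) * C(n, k+1)` over ℝ. -/
lemma aux_b (n k : ℕ) :
    ((n : ℝ) - k) * ((n + 1).choose (k + 1)) = ((n : ℝ) + 1) * (n.choose (k + 1)) := by
  rcases le_or_gt (k + 1) (n + 1) with h | h
  · have hkn : k ≤ n := by omega
    have h1 := Nat.choose_mul_succ_eq n (k + 1)
    have h2 : (n + 1 - (k + 1) : ℕ) = (n - k : ℕ) := by omega
    rw [h2] at h1
    have h3 := congrArg (Nat.cast (R := ℝ)) h1
    push_cast [Nat.cast_sub hkn] at h3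
    linarith
  · have h1 : (n + 1).choose (k + 1) = 0 := Nat.choose_eq_zero_of_lt (by omega)
    have h2 : n.choose (k + 1) = 0 := Nat.choose_eq_zero_of_lt (by omega)
    rw [h1, h2]
    push_cast
    ring

/-- Telescoping: `∑_{j=0}^{m} (2j - (n+1)) C(n+1,j)^2 = -(n+1) C(n,m)^2`. -/
lemma tele (n : ℕ) : ∀ m : ℕ, ∑ j ∈ range (m + 1),
    (2 * (j : ℝ) - ((n : ℝ) + 1)) * ((n + 1).choose j : ℝ) ^ 2
    = -((n : ℝ) + 1) * ((n.choose m : ℝ)) ^ 2 := by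
  intro m
  induction m with
  | zero => simp
  | succ m ih =>
      rw [Finset.sum_range_succ, ih]
      have h1 : ((n + 1).choose (m + 1) : ℝ) = (n.choose m : ℝ) + (n.choose (m + 1) : ℝ) := by
        rw [Nat.choose_succ_succ]
        push_cast
        ring
      have h2 := aux_a n m
      have h3 := aux_b n m
      set a : ℝ := (n.choose m : ℝ)
      set b : ℝ := (n.choose (m + 1) : ℝ)
      set c : ℝ := ((n + 1).choose (m + 1) : ℝ)
      push_cast
      linear_combination c * h2 - c * h3 + ((n : ℝ) + 1) * (a - b) * h1

/-- Truncated sums as indicator sums. -/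
lemma sum_trunc {M : Type*} [AddCommMonoid M] (g : ℕ → M) (m N : ℕ) (h : m ≤ N) :
    ∑ k ∈ range N, (if k < m then g k else 0) = ∑ k ∈ range m, g k := by
  rw [← Finset.sum_subset (Finset.range_subset_range.2 h)
    (fun x _ hx => by simp [(by simpa using hx : ¬ x < m)])]
  exact Finset.sum_congr rfl fun x hx => by simp [Finset.mem_range.1 hx]

/-- Vandermonde consequence: `2 * ∑_{k≤m} C(m+1,k+1) C(m,k) = C(2(m+1), m+1)`. -/
lemma vand2 (m : ℕ) :
    2 * ∑ k ∈ range (m + 1), ((m + 1).choose (k + 1)) * (m.choose k)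
      = (2 * (m + 1)).choose (m + 1) := by
  have hV : ∑ k ∈ range (m + 1), ((m + 1).choose (k + 1)) * (m.choose k)
      = ((m + 1) + m).choose (m + 1) := by
    rw [Nat.add_choose_eq, Finset.Nat.sum_antidiagonal_eq_sum_range_succ_mk]
    conv_rhs => rw [Finset.sum_range_succ']
    have h0 : (m.choose (m + 1 - 0)) = 0 := Nat.choose_eq_zero_of_lt (by omega)
    simp only [h0, Nat.mul_zero, Nat.add_zero]
    refine Finset.sum_congr rfl fun k hk => ?_
    have hk' : k ≤ m := by simpa [Nat.lt_succ_iff] using hk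
    congr 1
    have h2 : m + 1 - (k + 1) = m - k := by omega
    rw [h2, Nat.choose_symm hk']
  rw [hV]
  have hsymm : ((m + 1) + m).choose m = ((m + 1) + m).choose (m + 1) := by
    rw [← Nat.choose_symm (by omega : m ≤ (m + 1) + m)]
    congr 1
    omega
  have hpascal : (2 * (m + 1)).choose (m + 1)
      = ((m + 1) + m).choose m + ((m + 1) + m).choose (m + 1) := by
    have h : 2 * (m + 1) = ((m + 1) + m) + 1 := by omega
    rw [h, Nat.choose_succ_succ]
  omega

/-- `∑ C(n,j)^2 = C(2n,n)`. -/
lemma vand1 (n : ℕ) :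
    ∑ j ∈ range (n + 1), (n.choose j) * (n.choose j) = (2 * n).choose n := by
  have h : (2 * n : ℕ) = n + n := by omega
  rw [h, Nat.add_choose_eq, Finset.Nat.sum_antidiagonal_eq_sum_range_succ_mk]
  refine Finset.sum_congr rfl fun k hk => ?_
  have hk' : k ≤ n := by simpa [Nat.lt_succ_iff] using hk
  rw [Nat.choose_symm hk']

theorem sum_sq_choose_harmonic_identity' (n : ℕ) (hn : 1 ≤ n) :
    ∑ j ∈ Finset.range (n + 1),
      (n.choose j : ℝ) ^ 2 *
        (2 * j * ((harmonic (n - j) : ℝ) - (harmonic j : ℝ)) + 1) = 0 := by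
  obtain ⟨m, rfl⟩ : ∃ m, n = m + 1 := ⟨n - 1, by omega⟩
  set n := m + 1 with hn'
  -- Step 1: split the sum
  have hsplit : ∑ j ∈ range (n + 1),
      (n.choose j : ℝ) ^ 2 * (2 * j * ((harmonic (n - j) : ℝ) - (harmonic j : ℝ)) + 1)
      = (∑ j ∈ range (n + 1), (n.choose j : ℝ) ^ 2)
        + 2 * ∑ j ∈ range (n + 1),
            (j : ℝ) * (n.choose j : ℝ) ^ 2 * ((harmonic (n - j) : ℝ) - (harmonic j : ℝ)) := by
    rw [Finset.mul_sum, ← Finset.sum_add_distrib]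
    exact Finset.sum_congr rfl fun j _ => by ring
  rw [hsplit]
  -- Step 2: harmonic difference as indicator sums
  have hharm : ∀ j ∈ range (n + 1),
      (harmonic (n - j) : ℝ) - (harmonic j : ℝ)
      = ∑ k ∈ range n, ((if j < n - k then ((k : ℝ) + 1)⁻¹ else 0)
          - (if k < j then ((k : ℝ) + 1)⁻¹ else 0)) := by
    intro j hj
    have hj' : j ≤ n := by simpa [Nat.lt_succ_iff] using hj
    have e1 : (harmonic (n - j) : ℝ) = ∑ k ∈ range (n - j), ((k : ℝ) + 1)⁻¹ := by
      unfold harmonic; push_cast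
      exact Finset.sum_congr rfl fun _ _ => by ring
    have e2 : (harmonic j : ℝ) = ∑ k ∈ range j, ((k : ℝ) + 1)⁻¹ := by
      unfold harmonic; push_cast
      exact Finset.sum_congr rfl fun _ _ => by ring
    have r1 : ∑ k ∈ range n, (if j < n - k then ((k : ℝ) + 1)⁻¹ else 0)
        = ∑ k ∈ range (n - j), ((k : ℝ) + 1)⁻¹ := by
      rw [← sum_trunc (fun k => ((k : ℝ) + 1)⁻¹) (n - j) n (by omega)]
      refine Finset.sum_congr rfl fun k hk => ?_
      have hk' : k < n := Finset.mem_range.1 hk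
      exact if_congr (by omega) rfl rfl
    rw [Finset.sum_sub_distrib, r1,
      sum_trunc (fun k => ((k : ℝ) + 1)⁻¹) j n hj', e1, e2]
  -- Step 3: rewrite inner sum using hharm and swap
  have hA : ∑ j ∈ range (n + 1),
      (j : ℝ) * (n.choose j : ℝ) ^ 2 * ((harmonic (n - j) : ℝ) - (harmonic j : ℝ))
      = ∑ k ∈ range n, ∑ j ∈ range (n + 1),
          (j : ℝ) * (n.choose j : ℝ) ^ 2 * ((if j < n - k then ((k : ℝ) + 1)⁻¹ else 0)
            - (if k < j then ((k : ℝ) + 1)⁻¹ else 0)) := by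
    rw [Finset.sum_comm]
    refine Finset.sum_congr rfl fun j hj => ?_
    rw [hharm j hj, Finset.mul_sum]
  -- Step 4: evaluate the inner sum for each k
  have hinner : ∀ k ∈ range n, ∑ j ∈ range (n + 1),
      (j : ℝ) * (n.choose j : ℝ) ^ 2 * ((if j < n - k then ((k : ℝ) + 1)⁻¹ else 0)
        - (if k < j then ((k : ℝ) + 1)⁻¹ else 0))
      = -((n : ℝ) * (m.choose k : ℝ) ^ 2 * ((k : ℝ) + 1)⁻¹) := by
    intro k hk
    have hkn : k < n := Finset.mem_range.1 hk
    set w : ℝ := ((k : ℝ) + 1)⁻¹ with hw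
    have split : ∑ j ∈ range (n + 1),
        (j : ℝ) * (n.choose j : ℝ) ^ 2 * ((if j < n - k then w else 0)
          - (if k < j then w else 0))
        = (∑ j ∈ range (n + 1), (if j < n - k then (j : ℝ) * (n.choose j : ℝ) ^ 2 * w else 0))
          - ∑ j ∈ range (n + 1), (j : ℝ) * (n.choose j : ℝ) ^ 2 * (if k < j then w else 0) := by
      rw [← Finset.sum_sub_distrib]
      refine Finset.sum_congr rfl fun j _ => by
        by_cases h1 : j < n - k <;> by_cases h2 : k < j <;> simp [h1, h2] <;> ring
    -- reflect the second sum
    have refl2 : ∑ j ∈ range (n + 1), (j : ℝ) * (n.choose j : ℝ) ^ 2 * (if k < j then w else 0)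
        = ∑ j ∈ range (n + 1), (if j < n - k then ((n : ℝ) - j) * (n.choose j : ℝ) ^ 2 * w else 0) := by
      rw [← Finset.sum_range_reflect (fun j => (j : ℝ) * (n.choose j : ℝ) ^ 2 * (if k < j then w else 0)) (n + 1)]
      refine Finset.sum_congr rfl fun j hj => ?_
      have hj' : j ≤ n := by
        have := Finset.mem_range.1 hj; omega
      have hsub : n + 1 - 1 - j = n - j := by omega
      rw [hsub]
      have hcs : ((n : ℕ)).choose (n - j) = n.choose j := Nat.choose_symm hj'
      have hcast : ((n - j : ℕ) : ℝ) = (n : ℝ) - j := by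
        push_cast [Nat.cast_sub hj']; ring
      rw [hcs, hcast]
      by_cases h1 : k < n - j
      · have h2 : j < n - k := by omega
        simp [h1, h2]
      · have h2 : ¬ j < n - k := by omega
        simp [h1, h2]
    rw [split, refl2, ← Finset.sum_sub_distrib]
    have comb : ∑ j ∈ range (n + 1),
        ((if j < n - k then (j : ℝ) * (n.choose j : ℝ) ^ 2 * w else 0)
          - (if j < n - k then ((n : ℝ) - j) * (n.choose j : ℝ) ^ 2 * w else 0))
        = ∑ j ∈ range (n + 1),
            (if j < n - k then (2 * (j : ℝ) - (n : ℝ)) * (n.choose j : ℝ) ^ 2 * w else 0) := by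
      refine Finset.sum_congr rfl fun j _ => by
        by_cases h1 : j < n - k <;> simp [h1] <;> ring
    rw [comb, sum_trunc (fun j => (2 * (j : ℝ) - (n : ℝ)) * (n.choose j : ℝ) ^ 2 * w)
      (n - k) (n + 1) (by omega)]
    have hnk : n - k = (m - k) + 1 := by omega
    have htel := tele m (m - k)
    have : ∑ j ∈ range (n - k), (2 * (j : ℝ) - (n : ℝ)) * (n.choose j : ℝ) ^ 2 * w
        = (∑ j ∈ range ((m - k) + 1),
            (2 * (j : ℝ) - ((m : ℝ) + 1)) * ((m + 1).choose j : ℝ) ^ 2) * w := by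
      rw [hnk, Finset.sum_mul]
      refine Finset.sum_congr rfl fun j _ => ?_
      have : (n : ℝ) = (m : ℝ) + 1 := by push_cast [hn']; ring
      rw [this]
    rw [this, htel]
    have hms : m.choose (m - k) = m.choose k := Nat.choose_symm (by omega)
    rw [hms]
    have : (n : ℝ) = (m : ℝ) + 1 := by push_cast [hn']; ring
    rw [this]
    ring
  -- Step 5: evaluate A
  have hA2 : ∑ k ∈ range n, -((n : ℝ) * (m.choose k : ℝ) ^ 2 * ((k : ℝ) + 1)⁻¹)
      = -(∑ k ∈ range n, ((n.choose (k + 1) : ℝ) * (m.choose k : ℝ))) := by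
    rw [← Finset.sum_neg_distrib]
    refine Finset.sum_congr rfl fun k _ => ?_
    have ha := aux_a m k
    have hne : ((k : ℝ) + 1) ≠ 0 := by positivity
    have : (n : ℝ) = (m : ℝ) + 1 := by push_cast [hn']; ring
    rw [this]
    field_simp
    nlinarith [ha, sq_nonneg ((m.choose k : ℝ))]

  -- Step 6: put everything together
  rw [hA, Finset.sum_congr rfl hinner, hA2]
  have hv1 : ∑ j ∈ range (n + 1), (n.choose j : ℝ) ^ 2 = ((2 * n).choose n : ℝ) := by
    rw [← vand1 n]
    push_cast
    exact Finset.sum_congr rfl fun j _ => by ring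
  have hv2 : 2 * ∑ k ∈ range n, ((n.choose (k + 1) : ℝ) * (m.choose k : ℝ))
      = ((2 * n).choose n : ℝ) := by
    have := congrArg (Nat.cast (R := ℝ)) (vand2 m)
    push_cast at this
    linarith [this]
  rw [hv1]
  linarith [hv2]
end

section
/- Euler's constant admits the double integral representation γ = ∫_0^1 ∫_0^1 (1-x)/((1-xy)(-log(xy))) dx dy. -/
open Real MeasureTheory Set Filter

lemma term_nonneg' (n : ℕ) : 0 ≤ 1/((n:ℝ)+1) - Real.log (((n:ℝ)+2)/((n:ℝ)+1)) := by
  have h1 : (0:ℝ) < (n:ℝ)+1 := by positivity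
  have h := Real.log_le_sub_one_of_pos (show (0:ℝ) < ((n:ℝ)+2)/((n:ℝ)+1) by positivity)
  have h2 : ((n:ℝ)+2)/((n:ℝ)+1) - 1 = 1/((n:ℝ)+1) := by rw [div_sub_one h1.ne']; norm_num
  linarith [h2 ▸ h]

lemma gamma_series : HasSum (fun n : ℕ ↦ 1/((n:ℝ)+1) - Real.log (((n:ℝ)+2)/((n:ℝ)+1)))
    Real.eulerMascheroniConstant := by
  rw [hasSum_iff_tendsto_nat_of_nonneg term_nonneg']
  have key : ∀ N : ℕ, ∑ n ∈ Finset.range N, (1/((n:ℝ)+1) - Real.log (((n:ℝ)+2)/((n:ℝ)+1)))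
      = Real.eulerMascheroniSeq N := by
    intro N
    rw [Finset.sum_sub_distrib, Real.eulerMascheroniSeq]
    have h1 : ∑ n ∈ Finset.range N, (1:ℝ)/((n:ℝ)+1) = (harmonic N : ℝ) := by
      rw [harmonic]; push_cast
      exact Finset.sum_congr rfl fun n _ ↦ by rw [one_div]
    have h2 : ∑ n ∈ Finset.range N, Real.log (((n:ℝ)+2)/((n:ℝ)+1)) = Real.log ((N:ℝ)+1) := by
      have h := Finset.sum_range_sub (f := fun n : ℕ ↦ Real.log ((n:ℝ)+1)) N
      simp only [Nat.cast_zero, zero_add, Real.log_one, sub_zero] at h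
      rw [← h]
      refine Finset.sum_congr rfl fun n _ ↦ ?_
      rw [Real.log_div (by positivity) (by positivity)]
      push_cast; ring_nf
    rw [h1, h2]
  simp only [key]
  exact Real.tendsto_eulerMascheroniSeq

lemma integral_exp_neg_mul' {b : ℝ} (hb : 0 < b) :
    ∫ t in Set.Ioi (0:ℝ), Real.exp (-(b*t)) = 1/b := by
  have h := integral_exp_neg_mul_rpow one_pos hb
  rw [show (1:ℝ)/1+1 = 2 by norm_num, show (-1:ℝ)/1 = -1 by norm_num, Real.Gamma_two, mul_one,
    Real.rpow_neg_one] at h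
  simp_rw [Real.rpow_one, neg_mul] at h
  rw [h, one_div]

lemma integral_rpow_Ioi {z : ℝ} (h0 : 0 < z) (h1 : z < 1) :
    ∫ t in Set.Ioi (0:ℝ), z ^ t = 1/(-Real.log z) := by
  have hl : 0 < -Real.log z := by have := Real.log_neg h0 h1; linarith
  have e : ∀ t : ℝ, z ^ t = Real.exp (-((-Real.log z) * t)) := fun t ↦ by
    rw [Real.rpow_def_of_pos h0]; ring_nf
  simp_rw [e]
  exact integral_exp_neg_mul' hl

lemma integrableOn_rpow_Ioi {z : ℝ} (h0 : 0 < z) (h1 : z < 1) :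
    IntegrableOn (fun t : ℝ ↦ z ^ t) (Set.Ioi (0:ℝ)) := by
  have hl : 0 < -Real.log z := by have := Real.log_neg h0 h1; linarith
  have e : ∀ t : ℝ, z ^ t = Real.exp (-(-Real.log z) * t) := fun t ↦ by
    rw [Real.rpow_def_of_pos h0]; ring_nf
  simp_rw [e]
  exact exp_neg_integrableOn_Ioi 0 hl

lemma lintegral_rpow_Ioi {z : ℝ} (h0 : 0 < z) (h1 : z < 1) :
    ∫⁻ t in Set.Ioi (0:ℝ), ENNReal.ofReal (z ^ t) = ENNReal.ofReal (1/(-Real.log z)) := by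
  rw [← integral_rpow_Ioi h0 h1,
    MeasureTheory.ofReal_integral_eq_lintegral_ofReal (integrableOn_rpow_Ioi h0 h1)
      (Filter.Eventually.of_forall fun t ↦ Real.rpow_nonneg h0.le t)]

lemma integral_rpow_Ioc {c : ℝ} (hc : -1 < c) :
    ∫ x in Set.Ioc (0:ℝ) 1, x ^ c = 1/(c+1) := by
  rw [← intervalIntegral.integral_of_le zero_le_one, integral_rpow (Or.inl hc),
    Real.one_rpow, Real.zero_rpow (by linarith), sub_zero, one_div]

lemma integrableOn_rpow_Ioc {c : ℝ} (hc : -1 < c) :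
    IntegrableOn (fun x : ℝ ↦ x ^ c) (Set.Ioc (0:ℝ) 1) :=
  (intervalIntegrable_iff_integrableOn_Ioc_of_le zero_le_one).mp
    (intervalIntegral.intervalIntegrable_rpow' hc)

lemma lint_y {c : ℝ} (hc : 0 ≤ c) :
    ∫⁻ y in Set.Ioc (0:ℝ) 1, ENNReal.ofReal (y ^ c) = ENNReal.ofReal (1/(c+1)) := by
  rw [← integral_rpow_Ioc (by linarith),
    MeasureTheory.ofReal_integral_eq_lintegral_ofReal (integrableOn_rpow_Ioc (by linarith))
      ((ae_restrict_iff' measurableSet_Ioc).2 (Filter.Eventually.of_forall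
        fun y hy ↦ Real.rpow_nonneg hy.1.le c))]

lemma lint_x {c : ℝ} (hc : 0 ≤ c) :
    ∫⁻ x in Set.Ioc (0:ℝ) 1, ENNReal.ofReal ((1-x) * x ^ c)
      = ENNReal.ofReal (1/(c+1) - 1/(c+2)) := by
  have hint : ∀ d : ℝ, 0 ≤ d → IntegrableOn (fun x : ℝ ↦ x ^ d) (Set.Ioc (0:ℝ) 1) :=
    fun d hd ↦ integrableOn_rpow_Ioc (by linarith)
  have key : ∫ x in Set.Ioc (0:ℝ) 1, (1-x) * x ^ c = 1/(c+1) - 1/(c+2) := by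
    have e : ∀ x ∈ Set.Ioc (0:ℝ) 1, (1-x) * x ^ c = x ^ c - x ^ (c+1) := by
      intro x hx
      rw [Real.rpow_add hx.1, Real.rpow_one]; ring
    rw [MeasureTheory.setIntegral_congr_fun measurableSet_Ioc e,
      MeasureTheory.integral_sub (hint c hc) (hint (c+1) (by linarith)),
      integral_rpow_Ioc (by linarith), integral_rpow_Ioc (by linarith)]
    ring_nf
  rw [← key, MeasureTheory.ofReal_integral_eq_lintegral_ofReal]
  · have e : ∀ x ∈ Set.Ioc (0:ℝ) 1, (fun x : ℝ ↦ (1-x) * x ^ c) x = x ^ c - x ^ (c+1) := by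
      intro x hx; rw [Real.rpow_add hx.1, Real.rpow_one]; ring
    exact (MeasureTheory.integrableOn_congr_fun e measurableSet_Ioc).mpr
      ((hint c hc).sub (hint (c+1) (by linarith)))
  · exact (ae_restrict_iff' measurableSet_Ioc).2 (Filter.Eventually.of_forall
      fun x hx ↦ mul_nonneg (by linarith [hx.2]) (Real.rpow_nonneg hx.1.le c))

section tInt
variable {c : ℝ} (hc : 0 < c)

noncomputable def Fg (c t : ℝ) : ℝ := -(1/(c+t)) + (Real.log (c+1+t) - Real.log (c+t))

lemma Fg_hasDeriv (hc : 0 < c) {x : ℝ} (hx : 0 ≤ x) :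
    HasDerivAt (Fg c) ((1/(c+x) - 1/(c+1+x)) * (1/(c+x))) x := by
  have h1 : 0 < c + x := by linarith
  have h2 : 0 < c + 1 + x := by linarith
  have d1 : HasDerivAt (fun t : ℝ ↦ c + t) 1 x := (hasDerivAt_id x).const_add c
  have d2 : HasDerivAt (fun t : ℝ ↦ c + 1 + t) 1 x := (hasDerivAt_id x).const_add (c+1)
  have dinv : HasDerivAt (fun t : ℝ ↦ 1/(c+t)) (-(1/(c+x)^2)) x := by
    simpa [one_div, neg_div, Pi.inv_def] using d1.inv h1.ne'
  have dlog1 : HasDerivAt (fun t : ℝ ↦ Real.log (c+1+t)) (1/(c+1+x)) x := by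
    simpa [one_div] using d2.log h2.ne'
  have dlog2 : HasDerivAt (fun t : ℝ ↦ Real.log (c+t)) (1/(c+x)) x := by
    simpa [one_div] using d1.log h1.ne'
  have := (dinv.neg).add (dlog1.sub dlog2)
  refine this.congr_deriv ?_
  field_simp
  ring

lemma Fg_tendsto (hc : 0 < c) : Tendsto (Fg c) atTop (nhds 0) := by
  have h1 : Tendsto (fun t : ℝ ↦ c + t) atTop atTop :=
    tendsto_atTop_add_const_left _ c tendsto_id
  have h2 : Tendsto (fun t : ℝ ↦ 1/(c+t)) atTop (nhds 0) := by
    simpa [one_div, Function.comp_def] using tendsto_inv_atTop_zero.comp h1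
  have h3 : Tendsto (fun t : ℝ ↦ Real.log (c+1+t) - Real.log (c+t)) atTop (nhds 0) := by
    have he : ∀ᶠ t in atTop, Real.log (c+1+t) - Real.log (c+t)
        = Real.log (1 + 1/(c+t)) := by
      filter_upwards [eventually_ge_atTop (0:ℝ)] with t ht
      have hp : 0 < c + t := by linarith
      rw [← Real.log_div (by linarith) hp.ne']
      congr 1
      field_simp
      ring
    rw [tendsto_congr' he]
    have : Tendsto (fun t : ℝ ↦ 1 + 1/(c+t)) atTop (nhds 1) := by
      simpa using tendsto_const_nhds.add h2
    have hcont := (Real.continuousAt_log one_ne_zero).tendsto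
    simpa [Function.comp_def] using hcont.comp this
  have := (h2.neg).add h3
  unfold Fg
  simpa [one_div] using this

lemma integral_t (hc : 0 < c) :
    ∫ t in Set.Ioi (0:ℝ), (1/(c+t) - 1/(c+1+t)) * (1/(c+t))
      = 1/c - Real.log ((c+1)/c) := by
  have hnn : ∀ x ∈ Set.Ioi (0:ℝ), 0 ≤ (1/(c+x) - 1/(c+1+x)) * (1/(c+x)) := by
    intro x hx
    have h1 : (0:ℝ) < c + x := by have := hx.out; linarith
    have h2 : (0:ℝ) < c + 1 + x := by have := hx.out; linarith
    have : 1/(c+1+x) ≤ 1/(c+x) := by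
      apply one_div_le_one_div_of_le h1; linarith
    have : 0 ≤ 1/(c+x) - 1/(c+1+x) := by linarith
    positivity
  rw [MeasureTheory.integral_Ioi_of_hasDerivAt_of_nonneg
    (Fg_hasDeriv hc le_rfl).continuousAt.continuousWithinAt
    (fun x hx ↦ Fg_hasDeriv hc (le_of_lt hx)) hnn (Fg_tendsto hc)]
  have hc1 : (0:ℝ) < c + 1 := by linarith
  rw [Fg]
  rw [Real.log_div hc1.ne' hc.ne']
  simp
  ring
end tInt

lemma lintegral_t {c : ℝ} (hc : 0 < c) :
    ∫⁻ t in Set.Ioi (0:ℝ), ENNReal.ofReal ((1/(c+t) - 1/(c+1+t)) * (1/(c+t)))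
      = ENNReal.ofReal (1/c - Real.log ((c+1)/c)) := by
  have hnn : ∀ x ∈ Set.Ioi (0:ℝ), 0 ≤ (1/(c+x) - 1/(c+1+x)) * (1/(c+x)) := by
    intro x hx
    have h1 : (0:ℝ) < c + x := by have := hx.out; linarith
    have h2 : (0:ℝ) < c + 1 + x := by have := hx.out; linarith
    have h3 : 1/(c+1+x) ≤ 1/(c+x) := by
      apply one_div_le_one_div_of_le h1; linarith
    have h4 : 0 ≤ 1/(c+x) - 1/(c+1+x) := by linarith
    positivity
  have hint : IntegrableOn (fun t : ℝ ↦ (1/(c+t) - 1/(c+1+t)) * (1/(c+t))) (Set.Ioi (0:ℝ)) :=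
    integrableOn_Ioi_deriv_of_nonneg (Fg_hasDeriv hc le_rfl).continuousAt.continuousWithinAt
      (fun x hx ↦ Fg_hasDeriv hc (le_of_lt hx)) hnn (Fg_tendsto hc)
  rw [← integral_t hc, MeasureTheory.ofReal_integral_eq_lintegral_ofReal hint
    ((ae_restrict_iff' measurableSet_Ioi).2 (Filter.Eventually.of_forall hnn))]

lemma measf (n : ℕ) : Measurable (fun p : ℝ × ℝ ↦
    ENNReal.ofReal ((1 - p.1) * (p.1*p.2)^(n:ℕ) / (-Real.log (p.1*p.2)))) := by
  apply Measurable.ennreal_ofReal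
  exact (((measurable_const.sub measurable_fst).mul ((measurable_fst.mul measurable_snd).pow_const n))).div
    ((Real.measurable_log.comp (measurable_fst.mul measurable_snd)).neg)

lemma measF : Measurable (fun p : ℝ × ℝ ↦
    (1 - p.1)/((1 - p.1*p.2)*(-Real.log (p.1*p.2)))) := by
  exact (measurable_const.sub measurable_fst).div
    ((measurable_const.sub (measurable_fst.mul measurable_snd)).mul
      ((Real.measurable_log.comp (measurable_fst.mul measurable_snd)).neg))


lemma lint_x' {c : ℝ} (hc : 0 ≤ c) :
    ∫⁻ x in Set.Ioo (0:ℝ) 1, ENNReal.ofReal ((1-x) * x ^ c)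
      = ENNReal.ofReal (1/(c+1) - 1/(c+2)) := by
  rw [Measure.restrict_congr_set Ioo_ae_eq_Ioc]; exact lint_x hc

lemma lint_y' {c : ℝ} (hc : 0 ≤ c) :
    ∫⁻ y in Set.Ioo (0:ℝ) 1, ENNReal.ofReal (y ^ c) = ENNReal.ofReal (1/(c+1)) := by
  rw [Measure.restrict_congr_set Ioo_ae_eq_Ioc]; exact lint_y hc

lemma Tn (n : ℕ) :
    ∫⁻ y in Set.Ioo (0:ℝ) 1, ∫⁻ x in Set.Ioo (0:ℝ) 1,
      ENNReal.ofReal ((1-x) * (x*y)^(n:ℕ) / (-Real.log (x*y)))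
    = ENNReal.ofReal (1/((n:ℝ)+1) - Real.log (((n:ℝ)+2)/((n:ℝ)+1))) := by
  have step1 : ∀ y ∈ Set.Ioo (0:ℝ) 1, ∀ x ∈ Set.Ioo (0:ℝ) 1,
      ENNReal.ofReal ((1-x) * (x*y)^(n:ℕ) / (-Real.log (x*y)))
      = ∫⁻ t in Set.Ioi (0:ℝ),
          ENNReal.ofReal ((1-x) * Real.exp (Real.log x * ((n:ℝ)+t))
            * Real.exp (Real.log y * ((n:ℝ)+t))) := by
    intro y hy x hx
    obtain ⟨hx0, hx1⟩ := hx; obtain ⟨hy0, hy1⟩ := hy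
    have hz0 : 0 < x*y := mul_pos hx0 hy0
    have hz1 : x*y < 1 := by nlinarith
    have e : ∀ t ∈ Set.Ioi (0:ℝ),
        ENNReal.ofReal ((1-x) * Real.exp (Real.log x * ((n:ℝ)+t))
          * Real.exp (Real.log y * ((n:ℝ)+t)))
        = ENNReal.ofReal ((1-x) * (x*y)^(n:ℕ)) * ENNReal.ofReal ((x*y) ^ t) := by
      intro t _
      rw [← ENNReal.ofReal_mul (mul_nonneg (by linarith) (pow_nonneg hz0.le n))]
      congr 1
      rw [← Real.rpow_def_of_pos hx0, ← Real.rpow_def_of_pos hy0,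
        Real.rpow_add hx0, Real.rpow_add hy0, Real.rpow_natCast, Real.rpow_natCast,
        Real.mul_rpow hx0.le hy0.le, mul_pow]
      ring
    rw [setLIntegral_congr_fun measurableSet_Ioi e,
      lintegral_const_mul' _ _ ENNReal.ofReal_ne_top, lintegral_rpow_Ioi hz0 hz1,
      ← ENNReal.ofReal_mul (mul_nonneg (by linarith) (pow_nonneg hz0.le n)), mul_one_div]
  rw [setLIntegral_congr_fun measurableSet_Ioo
    (fun y hy ↦ setLIntegral_congr_fun measurableSet_Ioo
      (fun x hx ↦ step1 y hy x hx))]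
  -- swap x and t (inside fixed y)
  have swap1 : ∀ y ∈ Set.Ioo (0:ℝ) 1,
      (∫⁻ x in Set.Ioo (0:ℝ) 1, ∫⁻ t in Set.Ioi (0:ℝ),
        ENNReal.ofReal ((1-x) * Real.exp (Real.log x * ((n:ℝ)+t))
          * Real.exp (Real.log y * ((n:ℝ)+t))))
      = ∫⁻ t in Set.Ioi (0:ℝ),
          ENNReal.ofReal ((1/(((n:ℝ)+t)+1) - 1/(((n:ℝ)+t)+2)))
            * ENNReal.ofReal (Real.exp (Real.log y * ((n:ℝ)+t))) := by
    intro y hy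
    rw [lintegral_lintegral_swap]
    · refine setLIntegral_congr_fun measurableSet_Ioi
        (fun t ht ↦ ?_)
      have hc : (0:ℝ) ≤ (n:ℝ) + t := by have := ht.out; positivity
      have e2 : ∀ x ∈ Set.Ioo (0:ℝ) 1,
          ENNReal.ofReal ((1-x) * Real.exp (Real.log x * ((n:ℝ)+t))
            * Real.exp (Real.log y * ((n:ℝ)+t)))
          = ENNReal.ofReal ((1-x) * x ^ ((n:ℝ)+t))
            * ENNReal.ofReal (Real.exp (Real.log y * ((n:ℝ)+t))) := by
        intro x hx
        rw [← Real.rpow_def_of_pos hx.1, ENNReal.ofReal_mul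
          (mul_nonneg (by linarith [hx.2]) (Real.rpow_nonneg hx.1.le _))]
      rw [setLIntegral_congr_fun measurableSet_Ioo e2,
        lintegral_mul_const' _ _ ENNReal.ofReal_ne_top, lint_x' hc]
    · apply Measurable.aemeasurable
      apply Measurable.ennreal_ofReal
      exact (((measurable_const.sub measurable_fst).mul
        (Real.measurable_exp.comp ((Real.measurable_log.comp measurable_fst).mul
          (measurable_const.add measurable_snd)))).mul
        (Real.measurable_exp.comp (measurable_const.mul
          (measurable_const.add measurable_snd))))
  rw [setLIntegral_congr_fun measurableSet_Ioo swap1]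
  -- swap y and t
  rw [lintegral_lintegral_swap]
  · have step3 : ∀ t ∈ Set.Ioi (0:ℝ),
        (∫⁻ y in Set.Ioo (0:ℝ) 1,
          ENNReal.ofReal ((1/(((n:ℝ)+t)+1) - 1/(((n:ℝ)+t)+2)))
            * ENNReal.ofReal (Real.exp (Real.log y * ((n:ℝ)+t))))
        = ENNReal.ofReal ((1/(((n:ℝ)+1)+t) - 1/(((n:ℝ)+1)+1+t)) * (1/(((n:ℝ)+1)+t))) := by
      intro t ht
      have hc : (0:ℝ) ≤ (n:ℝ) + t := by have := ht.out; positivity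
      rw [lintegral_const_mul' _ _ ENNReal.ofReal_ne_top]
      have e3 : ∀ y ∈ Set.Ioo (0:ℝ) 1,
          ENNReal.ofReal (Real.exp (Real.log y * ((n:ℝ)+t)))
          = ENNReal.ofReal (y ^ ((n:ℝ)+t)) := by
        intro y hy
        rw [← Real.rpow_def_of_pos hy.1]
      rw [setLIntegral_congr_fun measurableSet_Ioo e3,
        lint_y' hc, ← ENNReal.ofReal_mul]
      · congr 2 <;> ring
      · have h1 : (0:ℝ) < (n:ℝ)+t+1 := by linarith
        have h2 : (0:ℝ) < (n:ℝ)+t+2 := by linarith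
        have h3 : 1/((n:ℝ)+t+2) ≤ 1/((n:ℝ)+t+1) := by
          apply one_div_le_one_div_of_le h1; linarith
        linarith
    rw [setLIntegral_congr_fun measurableSet_Ioi step3,
      lintegral_t (show (0:ℝ) < (n:ℝ)+1 by positivity)]
    norm_num
    congr 3
    ring
  · apply Measurable.aemeasurable
    refine Measurable.mul
      (f := fun p : ℝ × ℝ ↦ ENNReal.ofReal (1 / ((n:ℝ) + p.2 + 1) - 1 / ((n:ℝ) + p.2 + 2)))
      (g := fun p : ℝ × ℝ ↦ ENNReal.ofReal (Real.exp (Real.log p.1 * ((n:ℝ) + p.2)))) ?_ ?_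
    · apply Measurable.ennreal_ofReal
      apply Measurable.sub
      · exact measurable_const.div ((measurable_const.add measurable_snd).add measurable_const)
      · exact measurable_const.div ((measurable_const.add measurable_snd).add measurable_const)
    · apply Measurable.ennreal_ofReal
      exact Real.measurable_exp.comp
        ((Real.measurable_log.comp measurable_fst).mul (measurable_const.add measurable_snd))

lemma Mlem : ∫⁻ y in Set.Ioo (0:ℝ) 1, ∫⁻ x in Set.Ioo (0:ℝ) 1,
    ENNReal.ofReal ((1 - x)/((1 - x*y)*(-Real.log (x*y))))
    = ENNReal.ofReal Real.eulerMascheroniConstant := by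
  have ptwise : ∀ y ∈ Set.Ioo (0:ℝ) 1, ∀ x ∈ Set.Ioo (0:ℝ) 1,
      ENNReal.ofReal ((1 - x)/((1 - x*y)*(-Real.log (x*y))))
      = ∑' n : ℕ, ENNReal.ofReal ((1-x) * (x*y)^(n:ℕ) / (-Real.log (x*y))) := by
    intro y hy x hx
    obtain ⟨hx0, hx1⟩ := hx; obtain ⟨hy0, hy1⟩ := hy
    have hz0 : 0 < x*y := mul_pos hx0 hy0
    have hz1 : x*y < 1 := by nlinarith
    have hL : 0 < -Real.log (x*y) := by have := Real.log_neg hz0 hz1; linarith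
    have hsum : Summable (fun n : ℕ ↦ (1-x) * (x*y)^(n:ℕ) / (-Real.log (x*y))) := by
      have e : (fun n : ℕ ↦ (1-x) * (x*y)^(n:ℕ) / (-Real.log (x*y)))
          = fun n : ℕ ↦ ((1-x)/(-Real.log (x*y))) * (x*y)^(n:ℕ) := by
        funext n; ring
      rw [e]
      exact (summable_geometric_of_lt_one hz0.le hz1).mul_left _
    have treal : ∑' n : ℕ, (1-x) * (x*y)^(n:ℕ) / (-Real.log (x*y))
        = (1 - x)/((1 - x*y)*(-Real.log (x*y))) := by
      have e : (fun n : ℕ ↦ (1-x) * (x*y)^(n:ℕ) / (-Real.log (x*y)))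
          = fun n : ℕ ↦ ((1-x)/(-Real.log (x*y))) * (x*y)^(n:ℕ) := by
        funext n; ring
      rw [e, tsum_mul_left, tsum_geometric_of_lt_one hz0.le hz1]
      field_simp
    rw [← treal, ENNReal.ofReal_tsum_of_nonneg (fun n ↦ div_nonneg (mul_nonneg (by linarith) (pow_nonneg hz0.le n)) hL.le) hsum]
  rw [setLIntegral_congr_fun measurableSet_Ioo
    (fun y hy ↦ setLIntegral_congr_fun measurableSet_Ioo
      (fun x hx ↦ ptwise y hy x hx))]
  have hm : ∀ (n : ℕ) (y : ℝ), Measurable (fun x : ℝ ↦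
      ENNReal.ofReal ((1-x) * (x*y)^(n:ℕ) / (-Real.log (x*y)))) := by
    intro n y
    exact (measf n).comp (measurable_id.prodMk measurable_const)
  rw [setLIntegral_congr_fun measurableSet_Ioo
    (fun y _ ↦ lintegral_tsum (fun n ↦ (hm n y).aemeasurable))]
  rw [lintegral_tsum]
  · rw [tsum_congr Tn, ← ENNReal.ofReal_tsum_of_nonneg term_nonneg' gamma_series.summable,
      gamma_series.tsum_eq]
  · intro n
    exact (Measurable.lintegral_prod_left
      (f := fun x y ↦ ENNReal.ofReal ((1-x) * (x*y)^(n:ℕ) / (-Real.log (x*y))))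
      (measf n)).aemeasurable

theorem eulerMascheroni_double_integral :
    Real.eulerMascheroniConstant =
      ∫ y in (0 : ℝ)..1, ∫ x in (0 : ℝ)..1,
        (1 - x) / ((1 - x * y) * (-Real.log (x * y))) := by
  have hfnn : ∀ y ∈ Set.Ioc (0:ℝ) 1, ∀ x ∈ Set.Ioc (0:ℝ) 1,
      0 ≤ (1 - x) / ((1 - x * y) * (-Real.log (x * y))) := by
    intro y hy x hx
    have hz0 : 0 < x * y := mul_pos hx.1 hy.1
    have hz1 : x * y ≤ 1 := by nlinarith [hx.2, hy.2, hx.1.le, hy.1.le]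
    rcases eq_or_lt_of_le hz1 with h | h
    · rw [h, Real.log_one, neg_zero, mul_zero, div_zero]
    · have hL : 0 < -Real.log (x*y) := by have := Real.log_neg hz0 h; linarith
      have h1 : (0:ℝ) < 1 - x*y := by linarith
      have h2 : (0:ℝ) ≤ 1 - x := by linarith [hx.2]
      positivity
  -- measurability of the slice and of the inner lintegral
  have hms : ∀ y : ℝ, Measurable (fun x : ℝ ↦
      (1 - x) / ((1 - x * y) * (-Real.log (x * y)))) :=
    fun y ↦ measF.comp (measurable_id.prodMk measurable_const)
  set A : ℝ → ENNReal := fun y ↦ ∫⁻ x in Set.Ioc (0:ℝ) 1,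
    ENNReal.ofReal ((1 - x) / ((1 - x * y) * (-Real.log (x * y)))) with hA
  have hmA : Measurable A := by
    apply Measurable.lintegral_prod_left
      (f := fun x y ↦ ENNReal.ofReal ((1 - x) / ((1 - x * y) * (-Real.log (x * y)))))
    exact measF.ennreal_ofReal
  have hAint : ∫⁻ y in Set.Ioc (0:ℝ) 1, A y = ENNReal.ofReal Real.eulerMascheroniConstant := by
    rw [← Measure.restrict_congr_set (Ioo_ae_eq_Ioc (a := (0:ℝ)) (b := 1)), ← Mlem]
    refine lintegral_congr_ae (Filter.Eventually.of_forall (fun y ↦ ?_))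
    rw [hA, ← Measure.restrict_congr_set (Ioo_ae_eq_Ioc (a := (0:ℝ)) (b := 1))]
  have hfin : ∀ᵐ y ∂(volume.restrict (Set.Ioc (0:ℝ) 1)), A y < ⊤ :=
    ae_lt_top hmA (by rw [hAint]; exact ENNReal.ofReal_ne_top)
  -- inner integral equality on Ioc
  have inner_eq : ∀ y ∈ Set.Ioc (0:ℝ) 1,
      (∫ x in (0:ℝ)..1, (1 - x) / ((1 - x * y) * (-Real.log (x * y)))) = (A y).toReal := by
    intro y hy
    rw [intervalIntegral.integral_of_le zero_le_one,
      MeasureTheory.integral_eq_lintegral_of_nonneg_ae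
        ((ae_restrict_iff' measurableSet_Ioc).2
          (Filter.Eventually.of_forall (fun x hx ↦ hfnn y hy x hx)))
        (hms y).aestronglyMeasurable]
  rw [intervalIntegral.integral_of_le zero_le_one,
    MeasureTheory.integral_eq_lintegral_of_nonneg_ae]
  · have : ∫⁻ y in Set.Ioc (0:ℝ) 1, ENNReal.ofReal
        (∫ x in (0:ℝ)..1, (1 - x) / ((1 - x * y) * (-Real.log (x * y)))) = ∫⁻ y in Set.Ioc (0:ℝ) 1, A y := by
      refine lintegral_congr_ae ?_
      filter_upwards [hfin, self_mem_ae_restrict measurableSet_Ioc] with y hyfin hymem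
      rw [inner_eq y hymem, ENNReal.ofReal_toReal hyfin.ne]
    rw [this, hAint, ENNReal.toReal_ofReal]
    linarith [Real.one_half_lt_eulerMascheroniConstant]
  · refine (ae_restrict_iff' measurableSet_Ioc).2 (Filter.Eventually.of_forall (fun y hy ↦ ?_))
    simp only [Pi.zero_apply]
    show 0 ≤ ∫ x in (0:ℝ)..1, (1 - x) / ((1 - x * y) * (-Real.log (x * y)))
    rw [intervalIntegral.integral_of_le zero_le_one]
    exact MeasureTheory.setIntegral_nonneg measurableSet_Ioc (fun x hx ↦ hfnn y hy x hx)
  · have : StronglyMeasurable (fun y : ℝ ↦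
        ∫ x in Set.Ioc (0:ℝ) 1, (1 - x) / ((1 - x * y) * (-Real.log (x * y)))) := by
      apply MeasureTheory.StronglyMeasurable.integral_prod_left'
        (f := fun p : ℝ × ℝ ↦ (1 - p.1) / ((1 - p.1 * p.2) * (-Real.log (p.1 * p.2))))
      exact measF.stronglyMeasurable
    refine AEStronglyMeasurable.congr this.aestronglyMeasurable ?_
    refine Filter.Eventually.of_forall (fun y ↦ ?_)
    show (∫ x in Set.Ioc (0:ℝ) 1, (1 - x) / ((1 - x * y) * (-Real.log (x * y))))
      = ∫ x in (0:ℝ)..1, (1 - x) / ((1 - x * y) * (-Real.log (x * y)))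
    rw [intervalIntegral.integral_of_le zero_le_one]
end
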